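/- Let p₀, p₁ > 0 with p₀ + p₁ = 1 and p₀ ≠ p₁. Let T₁ = [[p₀²p₁, p₀²p₁],[p₀p₁², p₀p₁²]] and T₂ = [[p₀p₁, p₀p₁],[0, p₁²]]. Then the spectral radius of T₁T₂^k equals Σ_{j=1}^{k+2} p₀^j p₁^{2k+3−j} = (1 − (p₀/p₁)^{k+2}) · p₀ p₁^{2k+3}/(p₁ − p₀). -/

import Mathlib

open Finset

noncomputable def specRad (M : Matrix (Fin 2) (Fin 2) ℝ) : ℝ :=
  sSup (abs '' spectrum ℝ M)

lemma spectrum_fin_two_rank_one (e f g h : ℝ) (hdet : e * h - f * g = 0) :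
    spectrum ℝ (!![e, f; g, h]) = {0, e + h} := by
  ext x
  have hM : (algebraMap ℝ (Matrix (Fin 2) (Fin 2) ℝ)) x - !![e, f; g, h]
      = !![x - e, -f; -g, x - h] := by
    rw [Algebra.algebraMap_eq_smul_one, Matrix.one_fin_two]
    ext i j
    fin_cases i <;> fin_cases j <;> simp
  rw [spectrum.mem_iff, hM, Matrix.isUnit_iff_isUnit_det, Matrix.det_fin_two_of,
    isUnit_iff_ne_zero, not_ne_iff]
  simp only [Set.mem_insert_iff, Set.mem_singleton_iff]
  constructor
  · intro hx
    have hx2 : x * (x - (e + h)) = 0 := by linear_combination hx - hdet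
    rcases mul_eq_zero.mp hx2 with h' | h'
    · exact Or.inl h'
    · exact Or.inr (by linarith)
  · rintro (rfl | rfl) <;> linear_combination hdet

set_option maxHeartbeats 1000000 in
theorem specRad_T1_T2_pow (p₀ p₁ : ℝ) (h₀ : 0 < p₀) (h₁ : 0 < p₁)
    (hsum : p₀ + p₁ = 1) (hne : p₀ < p₁) (k : ℕ) :
    specRad (!![p₀ ^ 2 * p₁, p₀ ^ 2 * p₁; p₀ * p₁ ^ 2, p₀ * p₁ ^ 2] *
        (!![p₀ * p₁, p₀ * p₁; 0, p₁ ^ 2] : Matrix (Fin 2) (Fin 2) ℝ) ^ k) =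
      ∑ j ∈ Finset.Icc 1 (k + 2), p₀ ^ j * p₁ ^ (2 * k + 3 - j) ∧
    (∑ j ∈ Finset.Icc 1 (k + 2), p₀ ^ j * p₁ ^ (2 * k + 3 - j)) =
      (1 - (p₀ / p₁) ^ (k + 2)) * (p₀ * p₁ ^ (2 * k + 3) / (p₁ - p₀)) := by
  have hp1 : p₁ ≠ 0 := ne_of_gt h₁
  have hd : p₁ - p₀ ≠ 0 := sub_ne_zero.mpr hne.ne'
  -- rewrite the Icc sum as a range sum
  have hIcc : (∑ j ∈ Finset.Icc 1 (k + 2), p₀ ^ j * p₁ ^ (2 * k + 3 - j))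
      = ∑ i ∈ range (k + 2), p₀ ^ (i + 1) * p₁ ^ (2 * k + 2 - i) := by
    rw [← Finset.Ico_add_one_right_eq_Icc, Finset.sum_Ico_eq_sum_range]
    apply Finset.sum_congr (by congr 1 <;> omega)
    intro i hi
    have hi' : i < k + 2 := by
      have := Finset.mem_range.mp hi; omega
    congr 1
    · congr 1; omega
    · congr 1; omega
  -- the power of T₂
  have hpow : ∀ n : ℕ, (!![p₀ * p₁, p₀ * p₁; 0, p₁ ^ 2] : Matrix (Fin 2) (Fin 2) ℝ) ^ n
      = !![(p₀ * p₁) ^ n, ∑ i ∈ range n, (p₀ * p₁) ^ (i + 1) * (p₁ ^ 2) ^ (n - 1 - i);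
          0, (p₁ ^ 2) ^ n] := by
    intro n
    induction n with
    | zero => simp [Matrix.one_fin_two]
    | succ n ih =>
      rw [pow_succ, ih, Matrix.mul_fin_two]
      have hS : (p₀ * p₁) ^ n * (p₀ * p₁)
          + (∑ i ∈ range n, (p₀ * p₁) ^ (i + 1) * (p₁ ^ 2) ^ (n - 1 - i)) * p₁ ^ 2
          = ∑ i ∈ range (n + 1), (p₀ * p₁) ^ (i + 1) * (p₁ ^ 2) ^ (n + 1 - 1 - i) := by
        rw [Finset.sum_range_succ, add_comm, Finset.sum_mul]
        congr 1
        · apply Finset.sum_congr rfl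
          intro i hi
          have hi' := Finset.mem_range.mp hi
          rw [show n + 1 - 1 - i = (n - 1 - i) + 1 from by omega, pow_succ]
          ring
        · rw [show n + 1 - 1 - n = 0 from by omega, ← pow_succ]
          ring
      rw [← hS]
      ext i j
      fin_cases i <;> fin_cases j <;> simp [pow_succ] <;> ring
  set S : ℝ := ∑ i ∈ range k, (p₀ * p₁) ^ (i + 1) * (p₁ ^ 2) ^ (k - 1 - i) with hSdef
  have hSnn : 0 ≤ S := by
    apply Finset.sum_nonneg
    intro i _
    positivity
  -- compute the product matrix
  have hprod : (!![p₀ ^ 2 * p₁, p₀ ^ 2 * p₁; p₀ * p₁ ^ 2, p₀ * p₁ ^ 2] *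
        (!![p₀ * p₁, p₀ * p₁; 0, p₁ ^ 2] : Matrix (Fin 2) (Fin 2) ℝ) ^ k)
      = !![p₀ ^ 2 * p₁ * (p₀ * p₁) ^ k, p₀ ^ 2 * p₁ * (S + (p₁ ^ 2) ^ k);
           p₀ * p₁ ^ 2 * (p₀ * p₁) ^ k, p₀ * p₁ ^ 2 * (S + (p₁ ^ 2) ^ k)] := by
    rw [hpow k, Matrix.mul_fin_two, ← hSdef]
    congr 1 <;> ring
  -- trace value
  set t : ℝ := p₀ ^ 2 * p₁ * (p₀ * p₁) ^ k + p₀ * p₁ ^ 2 * (S + (p₁ ^ 2) ^ k) with htdef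
  have hspec : spectrum ℝ (!![p₀ ^ 2 * p₁, p₀ ^ 2 * p₁; p₀ * p₁ ^ 2, p₀ * p₁ ^ 2] *
        (!![p₀ * p₁, p₀ * p₁; 0, p₁ ^ 2] : Matrix (Fin 2) (Fin 2) ℝ) ^ k) = {0, t} := by
    rw [hprod, spectrum_fin_two_rank_one _ _ _ _ (by ring)]
  have ht : 0 < t := by
    have h1 : 0 < p₀ ^ 2 * p₁ * (p₀ * p₁) ^ k := by positivity
    have h2 : 0 < p₀ * p₁ ^ 2 * (S + (p₁ ^ 2) ^ k) := by
      have hb : (0:ℝ) < (p₁ ^ 2) ^ k := pow_pos (pow_pos h₁ 2) k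
      have hSb : (0:ℝ) < S + (p₁ ^ 2) ^ k := by linarith
      exact mul_pos (by positivity) hSb
    rw [htdef]; linarith
  -- trace equals the sum
  have htr : t = ∑ i ∈ range (k + 2), p₀ ^ (i + 1) * p₁ ^ (2 * k + 2 - i) := by
    rw [Finset.sum_range_succ', Finset.sum_range_succ]
    have hmid : ∑ i ∈ range k, p₀ ^ (i + 1 + 1) * p₁ ^ (2 * k + 2 - (i + 1))
        = p₀ * p₁ ^ 2 * S := by
      rw [hSdef, Finset.mul_sum]
      apply Finset.sum_congr rfl
      intro i hi
      have hi' := Finset.mem_range.mp hi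
      rw [show 2 * k + 2 - (i + 1) = 2 * (k - 1 - i) + (i + 3) from by omega,
        pow_add p₁, pow_mul p₁]
      ring
    rw [hmid]
    rw [show 2 * k + 2 - (k + 1) = k + 1 from by omega,
      show 2 * k + 2 - 0 = 2 * k + 2 from rfl]
    rw [htdef]
    have e1 : p₀ ^ 2 * p₁ * (p₀ * p₁) ^ k = p₀ ^ (k + 1 + 1) * p₁ ^ (k + 1) := by
      rw [mul_pow]; ring
    have e2 : p₀ * p₁ ^ 2 * (p₁ ^ 2) ^ k = p₀ ^ (0 + 1) * p₁ ^ (2 * k + 2) := by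
      rw [← pow_mul, show 2 * k + 2 = 2 + k * 2 from by ring, pow_add]
      ring
    rw [← e1, ← e2]
    ring
  constructor
  · rw [specRad, hspec, hIcc, ← htr, Set.image_insert_eq, Set.image_singleton,
      abs_zero, abs_of_pos ht, csSup_pair]
    exact max_eq_right ht.le
  · rw [hIcc]
    have hgeo := geom_sum₂_mul p₀ p₁ (k + 2)
    simp only [show k + 2 - 1 = k + 1 from rfl] at hgeo
    have hre : ∑ i ∈ range (k + 2), p₀ ^ (i + 1) * p₁ ^ (2 * k + 2 - i)
        = (p₀ * p₁ ^ (k + 1)) * ∑ i ∈ range (k + 2), p₀ ^ i * p₁ ^ (k + 1 - i) := by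
      rw [Finset.mul_sum]
      apply Finset.sum_congr rfl
      intro i hi
      have hi' := Finset.mem_range.mp hi
      rw [show 2 * k + 2 - i = (k + 1) + (k + 1 - i) from by omega, pow_add]
      ring
    rw [hre]
    rw [div_pow, one_sub_div (pow_ne_zero _ hp1), div_mul_div_comm,
      eq_div_iff (mul_ne_zero (pow_ne_zero _ hp1) hd)]
    rw [show 2 * k + 3 = (k + 1) + (k + 2) from by omega, pow_add]
    linear_combination (-(p₀ * p₁ ^ (k + 1) * p₁ ^ (k + 2))) * hgeo
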